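/- Fix an integer x ≥ 1 and y ∈ ℕ. For each n, let u_1, …, u_{t(n)} be chosen independently and uniformly at random from [n] = {1,…,n}, where t(n) = ⌊n^{(x−1)/x} · ω(n)⌋, ω(n) is any function tending to infinity as n → ∞, and t(n) = o(n), and let X_{t(n)}^{(x)} be the number of i ∈ [n] chosen exactly x times. Then the probability that X_{t(n)}^{(x)} ≥ y tends to 1 as n → ∞. -/

import Mathlib

open Filter

namespace UniformChoices

/-- Given `t` independent uniform choices `f : Fin t → Fin n` from `[n]`, the number of
elements of `[n]` chosen exactly `x` times. -/
def countExact (n t : ℕ) (f : Fin t → Fin n) (x : ℕ) : ℕ :=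
  (Finset.univ.filter fun i : Fin n =>
    (Finset.univ.filter fun j : Fin t => f j = i).card = x).card

/-- The expectation of `X_t^{(x)}`, the number of elements of `[n]` chosen exactly `x`
times among `t` independent uniform choices from `[n]`. -/
noncomputable def expCount (n t x : ℕ) : ℝ :=
  (∑ f : Fin t → Fin n, (countExact n t f x : ℝ)) / (n : ℝ) ^ t

open scoped Classical in
/-- The probability that `X_t^{(x)}` satisfies the predicate `p`, for `t` independent
uniform choices from `[n]`. -/
noncomputable def probCount (n t x : ℕ) (p : ℕ → Prop) : ℝ :=
  ((Finset.univ.filter fun f : Fin t → Fin n => p (countExact n t f x)).card : ℝ) /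
    (n : ℝ) ^ t

end UniformChoices


section Aux
open Finset Filter UniformChoices

lemma card_fiber_eq (n t : ℕ) (i : Fin n) (s : Finset (Fin t)) :
    (univ.filter fun f : Fin t → Fin n => univ.filter (fun j => f j = i) = s).card
      = (n - 1) ^ (t - s.card) := by
  have h1 : (univ.filter fun f : Fin t → Fin n => univ.filter (fun j => f j = i) = s)
      = Fintype.piFinset (fun j => if j ∈ s then {i} else univ.erase i) := by
    ext f
    simp only [mem_filter, mem_univ, true_and, Fintype.mem_piFinset, Finset.ext_iff]
    refine forall_congr' fun j => ?_
    by_cases hj : j ∈ s <;> simp [hj, eq_comm]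
  rw [h1, Fintype.card_piFinset]
  have h2 : ∀ j : Fin t, ((if j ∈ s then ({i} : Finset (Fin n)) else univ.erase i)).card
      = if j ∈ s then 1 else n - 1 := by
    intro j
    by_cases hj : j ∈ s <;> simp [hj, Finset.card_erase_of_mem]
  simp_rw [h2]
  rw [Finset.prod_ite]
  simp only [prod_const, one_pow, one_mul]
  congr 1
  rw [Finset.filter_not, Finset.filter_mem_eq_inter, Finset.univ_inter, card_sdiff_of_subset (subset_univ s), card_univ, Fintype.card_fin]

lemma count_one (n t x : ℕ) (i : Fin n) :
    (univ.filter fun f : Fin t → Fin n => (univ.filter (fun j => f j = i)).card = x).card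
      = t.choose x * (n - 1) ^ (t - x) := by
  rw [Finset.card_eq_sum_card_fiberwise
    (f := fun f : Fin t → Fin n => univ.filter (fun j => f j = i))
    (t := powersetCard x univ) (fun f hf => by
      simp only [Finset.mem_coe, mem_filter, mem_univ, true_and] at hf
      exact mem_powersetCard_univ.2 hf)]
  have : ∀ s ∈ powersetCard x (univ : Finset (Fin t)),
      ((univ.filter fun f : Fin t → Fin n => (univ.filter (fun j => f j = i)).card = x).filter
        (fun f => univ.filter (fun j => f j = i) = s)).card = (n-1)^(t-x) := by
    intro s hs
    rw [mem_powersetCard_univ] at hs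
    rw [Finset.filter_filter]
    have : (univ.filter fun f : Fin t → Fin n =>
        ((univ.filter (fun j => f j = i)).card = x ∧ univ.filter (fun j => f j = i) = s))
        = univ.filter fun f : Fin t → Fin n => univ.filter (fun j => f j = i) = s := by
      apply Finset.filter_congr
      intro f _
      constructor
      · exact fun h => h.2
      · exact fun h => ⟨h ▸ hs, h⟩
    rw [this, card_fiber_eq, hs]
  rw [Finset.sum_congr rfl this, Finset.sum_const, card_powersetCard, card_univ, Fintype.card_fin, smul_eq_mul]

lemma card_fiber_pair (n t : ℕ) (i i' : Fin n) (hii : i ≠ i') (s s' : Finset (Fin t))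
    (hd : Disjoint s s') :
    (univ.filter fun f : Fin t → Fin n =>
        univ.filter (fun j => f j = i) = s ∧ univ.filter (fun j => f j = i') = s').card
      = (n - 2) ^ (t - (s.card + s'.card)) := by
  have h1 : (univ.filter fun f : Fin t → Fin n =>
        univ.filter (fun j => f j = i) = s ∧ univ.filter (fun j => f j = i') = s')
      = Fintype.piFinset (fun j => if j ∈ s then {i} else if j ∈ s' then {i'}
          else (univ.erase i).erase i') := by
    ext f
    simp only [mem_filter, mem_univ, true_and, Fintype.mem_piFinset, Finset.ext_iff,
      mem_filter, mem_univ, true_and]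
    rw [← forall_and]
    refine forall_congr' fun j => ?_
    by_cases hj : j ∈ s
    · have hj' : j ∉ s' := fun h => (Finset.disjoint_left.1 hd hj) h
      simp only [hj, hj', if_true, iff_true, iff_false, Finset.mem_singleton]
      constructor
      · exact fun h => h.1
      · exact fun h => ⟨h, fun h' => hii (h ▸ h' ▸ rfl)⟩
    · by_cases hj' : j ∈ s'
      · simp only [hj, hj', if_true, if_false, iff_true, iff_false, Finset.mem_singleton]
        constructor
        · exact fun h => h.2
        · exact fun h => ⟨fun h' => hii (h' ▸ h ▸ rfl), h⟩
      · simp only [hj, hj', if_false, iff_false, Finset.mem_erase, Finset.mem_univ, and_true]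
        tauto
  rw [h1, Fintype.card_piFinset]
  have h2 : ∀ j : Fin t, ((if j ∈ s then ({i} : Finset (Fin n)) else if j ∈ s' then {i'}
      else (univ.erase i).erase i')).card = if j ∈ s ∪ s' then 1 else n - 2 := by
    intro j
    have hcard : ((univ.erase i).erase i').card = n - 2 := by
      rw [Finset.card_erase_of_mem (Finset.mem_erase.2 ⟨hii.symm, Finset.mem_univ _⟩),
        Finset.card_erase_of_mem (Finset.mem_univ _), card_univ, Fintype.card_fin]
      omega
    by_cases hj : j ∈ s
    · simp [hj]
    · by_cases hj' : j ∈ s' <;> simp [hj, hj', hcard]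
  simp_rw [h2]
  rw [Finset.prod_ite]
  simp only [prod_const, one_pow, one_mul]
  congr 1
  rw [Finset.filter_not, Finset.filter_mem_eq_inter, Finset.univ_inter,
    card_sdiff_of_subset (subset_univ _), card_univ, Fintype.card_fin,
    Finset.card_union_of_disjoint hd]

lemma count_pair (n t x : ℕ) (i i' : Fin n) (hii : i ≠ i') :
    (univ.filter fun f : Fin t → Fin n =>
        (univ.filter (fun j => f j = i)).card = x ∧ (univ.filter (fun j => f j = i')).card = x).card
      = t.choose x * (t - x).choose x * (n - 2) ^ (t - 2 * x) := by
  classical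
  set T := (powersetCard x (univ : Finset (Fin t))).sigma
      (fun s => powersetCard x sᶜ) with hT
  have hdisj : ∀ f : Fin t → Fin n,
      Disjoint (univ.filter (fun j => f j = i)) (univ.filter (fun j => f j = i')) := by
    intro f
    rw [Finset.disjoint_left]
    intro j hj hj'
    simp only [mem_filter] at hj hj'
    exact hii (hj.2 ▸ hj'.2 ▸ rfl)
  rw [Finset.card_eq_sum_card_fiberwise
    (f := fun f : Fin t → Fin n =>
      (⟨univ.filter (fun j => f j = i), univ.filter (fun j => f j = i')⟩ :
        Σ _ : Finset (Fin t), Finset (Fin t)))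
    (t := T) (fun f hf => by
      simp only [Finset.mem_coe, mem_filter, mem_univ, true_and] at hf
      rw [hT, Finset.mem_coe, Finset.mem_sigma, mem_powersetCard_univ, Finset.mem_powersetCard]
      exact ⟨hf.1, le_compl_iff_disjoint_left.2 (hdisj f), hf.2⟩)]
  have hinner : ∀ p ∈ T,
      ((univ.filter fun f : Fin t → Fin n =>
        (univ.filter (fun j => f j = i)).card = x ∧ (univ.filter (fun j => f j = i')).card = x).filter
        (fun f => (⟨univ.filter (fun j => f j = i), univ.filter (fun j => f j = i')⟩ :
          Σ _ : Finset (Fin t), Finset (Fin t)) = p)).card = (n - 2) ^ (t - 2 * x) := by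
    rintro ⟨s, s'⟩ hp
    rw [hT, Finset.mem_sigma, mem_powersetCard_univ, Finset.mem_powersetCard] at hp
    obtain ⟨hs, hsub, hs'⟩ := hp
    rw [Finset.filter_filter]
    have heq : (univ.filter fun f : Fin t → Fin n =>
        (((univ.filter (fun j => f j = i)).card = x ∧ (univ.filter (fun j => f j = i')).card = x) ∧
          (⟨univ.filter (fun j => f j = i), univ.filter (fun j => f j = i')⟩ :
            Σ _ : Finset (Fin t), Finset (Fin t)) = ⟨s, s'⟩))
        = univ.filter fun f : Fin t → Fin n =>
            univ.filter (fun j => f j = i) = s ∧ univ.filter (fun j => f j = i') = s' := by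
      apply Finset.filter_congr
      intro f _
      simp only [Sigma.mk.inj_iff, heq_eq_eq]
      constructor
      · exact fun h => h.2
      · exact fun h => ⟨⟨h.1 ▸ hs, h.2 ▸ hs'⟩, h.1, h.2⟩
    rw [heq, card_fiber_pair n t i i' hii s s' (le_compl_iff_disjoint_left.1 hsub), hs, hs']
    congr 1
    omega
  rw [Finset.sum_congr rfl hinner, Finset.sum_const, smul_eq_mul]
  congr 1
  rw [hT, Finset.card_sigma]
  have : ∀ s ∈ powersetCard x (univ : Finset (Fin t)), (powersetCard x sᶜ).card = (t-x).choose x := by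
    intro s hs
    rw [mem_powersetCard_univ] at hs
    rw [card_powersetCard, Finset.card_compl, Fintype.card_fin, hs]
  rw [Finset.sum_congr rfl this, Finset.sum_const, card_powersetCard, card_univ, Fintype.card_fin, smul_eq_mul]

namespace UniformChoices

lemma sum_countExact (n t x : ℕ) :
    ∑ f : Fin t → Fin n, countExact n t f x = n * (t.choose x * (n - 1) ^ (t - x)) := by
  have h : ∀ f : Fin t → Fin n, countExact n t f x
      = ∑ i : Fin n, if (univ.filter fun j => f j = i).card = x then 1 else 0 := by
    intro f; rw [countExact, Finset.card_filter]
  simp_rw [h]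
  rw [Finset.sum_comm]
  have h2 : ∀ i : Fin n,
      (∑ f : Fin t → Fin n, if (univ.filter fun j => f j = i).card = x then 1 else 0)
      = t.choose x * (n - 1) ^ (t - x) := by
    intro i
    rw [← Finset.card_filter]
    exact count_one n t x i
  rw [Finset.sum_congr rfl (fun i _ => h2 i), Finset.sum_const, card_univ,
    Fintype.card_fin, smul_eq_mul]

lemma sum_countExact_sq (n t x : ℕ) :
    ∑ f : Fin t → Fin n, (countExact n t f x)^2
      = n * (t.choose x * (n - 1) ^ (t - x))
        + (n * (n - 1)) * (t.choose x * (t - x).choose x * (n - 2) ^ (t - 2 * x)) := by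
  have h : ∀ f : Fin t → Fin n, (countExact n t f x)^2
      = ∑ i : Fin n, ∑ i' : Fin n,
          if ((univ.filter fun j => f j = i).card = x ∧ (univ.filter fun j => f j = i').card = x)
          then 1 else 0 := by
    intro f
    rw [countExact, Finset.card_filter, sq, Finset.sum_mul_sum]
    simp_rw [ite_mul, one_mul, zero_mul, ← ite_and]
  simp_rw [h]
  rw [Finset.sum_comm]
  have h2 : ∀ i : Fin n,
      (∑ f : Fin t → Fin n, ∑ i' : Fin n,
        if ((univ.filter fun j => f j = i).card = x ∧ (univ.filter fun j => f j = i').card = x)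
        then 1 else 0)
      = t.choose x * (n - 1) ^ (t - x)
        + (n - 1) * (t.choose x * (t - x).choose x * (n - 2) ^ (t - 2 * x)) := by
    intro i
    rw [Finset.sum_comm]
    have h3 : ∀ i' : Fin n,
        (∑ f : Fin t → Fin n,
          if ((univ.filter fun j => f j = i).card = x ∧ (univ.filter fun j => f j = i').card = x)
          then 1 else 0)
        = (univ.filter fun f : Fin t → Fin n =>
            (univ.filter fun j => f j = i).card = x ∧ (univ.filter fun j => f j = i').card = x).card := by
      intro i'; rw [← Finset.card_filter]
    rw [Finset.sum_congr rfl (fun i' _ => h3 i')]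
    rw [← Finset.sum_erase_add _ _ (mem_univ i)]
    have h4 : (univ.filter fun f : Fin t → Fin n =>
        (univ.filter fun j => f j = i).card = x ∧ (univ.filter fun j => f j = i).card = x).card
        = t.choose x * (n - 1) ^ (t - x) := by
      simp_rw [and_self]
      exact count_one n t x i
    have h5 : ∀ i' ∈ univ.erase i, (univ.filter fun f : Fin t → Fin n =>
        (univ.filter fun j => f j = i).card = x ∧ (univ.filter fun j => f j = i').card = x).card
        = t.choose x * (t - x).choose x * (n - 2) ^ (t - 2 * x) := by
      intro i' hi'
      exact count_pair n t x i i' (Ne.symm (Finset.mem_erase.1 hi').1)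
    rw [Finset.sum_congr rfl h5, Finset.sum_const, card_erase_of_mem (mem_univ i), card_univ,
      Fintype.card_fin, smul_eq_mul, h4]
    rw [Nat.add_comm]
  rw [Finset.sum_congr rfl (fun i _ => h2 i), Finset.sum_const, card_univ,
    Fintype.card_fin, smul_eq_mul, Nat.mul_add]
  ring

end UniformChoices

lemma key_nat (n t x : ℕ) (hn : 1 ≤ x) :
    (n * (n-1) * (t.choose x * (t - x).choose x * (n - 2) ^ (t - 2 * x))) * (n^t * (n-1)^(2*x))
      ≤ (n * (t.choose x * (n - 1) ^ (t - x)))^2 * n^(2*x) := by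
  rcases lt_or_ge t (2*x) with h | h
  · have h2 : t - x < x := by omega
    rw [Nat.choose_eq_zero_of_lt h2]; simp
  · rcases lt_or_ge n 2 with hn2 | hn2
    · interval_cases n
      · simp
      · have h0 : (1 - 1 : ℕ) ^ (2*x) = 0 := by
          rw [Nat.sub_self]; exact Nat.zero_pow (by omega)
        simp [h0]
    obtain ⟨k, hk⟩ : ∃ k, t = k + 2*x := ⟨t - 2*x, by omega⟩
    subst hk
    have e1 : k + 2*x - 2*x = k := by omega
    have e2 : k + 2*x - x = k + x := by omega
    rw [e1, e2]
    have hac : n*(n-2) ≤ (n-1)*(n-1) := by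
      obtain ⟨m, rfl⟩ : ∃ m, n = m + 2 := ⟨n - 2, by omega⟩
      have e3 : m + 2 - 1 = m + 1 := by omega
      have e4 : m + 2 - 2 = m := by omega
      rw [e3, e4]; nlinarith
    have hba : n - 1 ≤ n := by omega
    set C := (k+2*x).choose x with hC
    set C' := (k+x).choose x with hC'
    have hcc : C' ≤ C := Nat.choose_le_choose x (by omega)
    set a := n
    set b := n - 1 with hb
    set c := n - 2 with hc
    clear_value b c
    have h1 : (a * b * (C * C' * c ^ k)) * (a^(k+2*x) * b^(2*x))
        = ((a*b)*(C*C')*((a*c)^k))*(a^(2*x)*b^(2*x)) := by ring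
    have h2 : (a * (C * b ^ (k+x)))^2 * a^(2*x)
        = ((a*a)*(C*C)*((b*b)^k))*(a^(2*x)*b^(2*x)) := by ring
    rw [h1, h2]
    apply Nat.mul_le_mul _ le_rfl
    apply Nat.mul_le_mul _ (Nat.pow_le_pow_left hac k)
    exact Nat.mul_le_mul (Nat.mul_le_mul_left a hba) (Nat.mul_le_mul_left C hcc)

namespace UniformChoices

lemma expCount_eq (n t x : ℕ) :
    expCount n t x = ((n * (t.choose x * (n - 1) ^ (t - x)) : ℕ) : ℝ) / (n:ℝ)^t := by
  rw [expCount, ← Nat.cast_sum, sum_countExact]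

lemma probCount_le_one (n t x : ℕ) (hn : 1 ≤ n) (p : ℕ → Prop) :
    probCount n t x p ≤ 1 := by
  classical
  rw [probCount]
  have hN : (0:ℝ) < (n:ℝ)^t := by positivity
  rw [div_le_one hN]
  have := Finset.card_filter_le (univ : Finset (Fin t → Fin n))
    (fun f => p (countExact n t f x))
  calc ((univ.filter fun f : Fin t → Fin n => p (countExact n t f x)).card : ℝ)
      ≤ ((univ : Finset (Fin t → Fin n)).card : ℝ) := by exact_mod_cast this
    _ = (n:ℝ)^t := by rw [card_univ, Fintype.card_fun, Fintype.card_fin, Fintype.card_fin]; push_cast; ring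

lemma cheb (n t x y : ℕ) (hx : 1 ≤ x) (hn : 2 ≤ n)
    (hy : (y:ℝ) + 1 ≤ expCount n t x) :
    1 - (expCount n t x + (expCount n t x)^2 * (((n:ℝ)/((n:ℝ)-1))^(2*x) - 1)) /
        (expCount n t x - y)^2
      ≤ probCount n t x (fun c => y ≤ c) := by
  classical
  set μ := expCount n t x with hμ
  set A := t.choose x * (n - 1) ^ (t - x) with hA
  set B := t.choose x * (t - x).choose x * (n - 2) ^ (t - 2 * x) with hB
  have hn0 : (0:ℝ) < n := by positivity
  have hn1 : (1:ℝ) ≤ (n:ℝ) := by exact_mod_cast Nat.one_le_iff_ne_zero.2 (by omega)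
  have hnn : (2:ℝ) ≤ (n:ℝ) := by exact_mod_cast hn
  have hN : (0:ℝ) < (n:ℝ)^t := by positivity
  have hb : (0:ℝ) < (n:ℝ) - 1 := by linarith
  have hμy : (0:ℝ) < μ - y := by linarith
  have hμ0 : (0:ℝ) < μ := by
    have : (0:ℝ) ≤ y := Nat.cast_nonneg y
    linarith
  -- the mean formula
  have hmean : ((n * A : ℕ) : ℝ) = μ * (n:ℝ)^t := by
    rw [hμ, expCount_eq, div_mul_cancel₀ _ (ne_of_gt hN)]
  -- second moment bound
  have hkey := key_nat n t x hx
  have hc1 : ((n-1:ℕ):ℝ) = (n:ℝ)-1 := by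
    rw [Nat.cast_sub (by omega)]; norm_num
  have hc2 : ((n-2:ℕ):ℝ) = (n:ℝ)-2 := by
    rw [Nat.cast_sub (by omega)]; norm_num
  have hmean' : (n:ℝ) * ((t.choose x : ℝ) * ((n:ℝ)-1)^(t-x)) = μ * (n:ℝ)^t := by
    rw [← hmean, hA]; push_cast [hc1]; ring
  have hBR : ((n*(n-1)*B : ℕ) : ℝ) ≤ μ^2 * (((n:ℝ)/((n:ℝ)-1))^(2*x)) * (n:ℝ)^t := by
    have h := (Nat.cast_le (α := ℝ)).2 hkey
    push_cast [hc1, hc2] at h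
    have hid : μ^2 * (((n:ℝ)/((n:ℝ)-1))^(2*x)) * (n:ℝ)^t
        = ((μ * (n:ℝ)^t)^2 * (n:ℝ)^(2*x)) / ((n:ℝ)^t * ((n:ℝ)-1)^(2*x)) := by
      have hb' : (n:ℝ) - 1 ≠ 0 := ne_of_gt hb
      rw [div_pow]
      field_simp
    have hlhs : ((n*(n-1)*B : ℕ) : ℝ)
        = (n:ℝ) * ((n:ℝ)-1) * ((t.choose x : ℝ) * ((t-x).choose x : ℝ) * ((n:ℝ)-2)^(t-2*x)) := by
      rw [hB]; push_cast [hc1, hc2]; ring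
    rw [hid, le_div_iff₀ (by positivity), hlhs]
    calc (n:ℝ) * ((n:ℝ)-1) * ((t.choose x : ℝ) * ((t-x).choose x : ℝ) * ((n:ℝ)-2)^(t-2*x))
          * ((n:ℝ)^t * ((n:ℝ)-1)^(2*x))
        ≤ ((n:ℝ) * ((t.choose x : ℝ) * ((n:ℝ)-1)^(t-x)))^2 * (n:ℝ)^(2*x) := h
      _ = (μ * (n:ℝ)^t)^2 * (n:ℝ)^(2*x) := by rw [hmean']
  -- sum of squares
  have hS2 : (∑ f : Fin t → Fin n, (countExact n t f x : ℝ)^2)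
      = ((n * A : ℕ) : ℝ) + ((n*(n-1)*B : ℕ) : ℝ) := by
    have : (∑ f : Fin t → Fin n, (countExact n t f x : ℝ)^2)
        = ((∑ f : Fin t → Fin n, (countExact n t f x)^2 : ℕ) : ℝ) := by push_cast; rfl
    rw [this, sum_countExact_sq, hA, hB]
    push_cast
    ring
  -- sum of X
  have hS1 : (∑ f : Fin t → Fin n, (countExact n t f x : ℝ)) = μ * (n:ℝ)^t := by
    rw [hμ, expCount, div_mul_cancel₀ _ (ne_of_gt hN)]
  -- variance identity
  have hvar : (∑ f : Fin t → Fin n, ((countExact n t f x : ℝ) - μ)^2)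
      = (∑ f : Fin t → Fin n, (countExact n t f x : ℝ)^2) - μ^2 * (n:ℝ)^t := by
    have hexp : ∀ f : Fin t → Fin n, ((countExact n t f x : ℝ) - μ)^2
        = (countExact n t f x : ℝ)^2 - 2*μ*(countExact n t f x : ℝ) + μ^2 := fun f => by ring
    simp_rw [hexp]
    rw [Finset.sum_add_distrib, Finset.sum_sub_distrib, ← Finset.mul_sum, hS1,
      Finset.sum_const, card_univ, Fintype.card_fun, Fintype.card_fin, Fintype.card_fin,
      nsmul_eq_mul]
    push_cast
    ring
  -- Chebyshev counting
  set cbad := (univ.filter fun f : Fin t → Fin n => ¬ y ≤ countExact n t f x).card with hcbad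
  have hcheb : (cbad:ℝ) * (μ - y)^2 ≤ (∑ f : Fin t → Fin n, ((countExact n t f x : ℝ) - μ)^2) := by
    calc (cbad:ℝ) * (μ - y)^2
        = ∑ _f ∈ (univ.filter fun f : Fin t → Fin n => ¬ y ≤ countExact n t f x), (μ - y)^2 := by
          rw [Finset.sum_const, nsmul_eq_mul]
      _ ≤ ∑ f ∈ (univ.filter fun f : Fin t → Fin n => ¬ y ≤ countExact n t f x),
            ((countExact n t f x : ℝ) - μ)^2 := by
          apply Finset.sum_le_sum
          intro f hf
          have hf' : countExact n t f x < y := by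
            have := (mem_filter.1 hf).2
            omega
          have hXf : (countExact n t f x : ℝ) ≤ (y:ℝ) - 1 := by
            have : (countExact n t f x : ℝ) + 1 ≤ (y : ℝ) := by exact_mod_cast hf'
            linarith
          have h1 : μ - y ≤ μ - (countExact n t f x : ℝ) := by linarith
          calc (μ - y)^2 ≤ (μ - (countExact n t f x : ℝ))^2 :=
                pow_le_pow_left₀ (le_of_lt hμy) h1 2
            _ = ((countExact n t f x : ℝ) - μ)^2 := by ring
      _ ≤ ∑ f : Fin t → Fin n, ((countExact n t f x : ℝ) - μ)^2 := by
          apply Finset.sum_le_sum_of_subset_of_nonneg (Finset.subset_univ _)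
          intro f _ _
          positivity
  -- put together: cbad / n^t ≤ bound
  have hmain : (cbad:ℝ) / (n:ℝ)^t
      ≤ (μ + μ^2 * (((n:ℝ)/((n:ℝ)-1))^(2*x) - 1)) / (μ - y)^2 := by
    rw [div_le_div_iff₀ hN (by positivity)]
    have : (cbad:ℝ) * (μ - y)^2 ≤ (μ + μ^2 * (((n:ℝ)/((n:ℝ)-1))^(2*x) - 1)) * (n:ℝ)^t := by
      calc (cbad:ℝ) * (μ - y)^2 ≤ _ := hcheb
        _ = (∑ f : Fin t → Fin n, (countExact n t f x : ℝ)^2) - μ^2 * (n:ℝ)^t := hvar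
        _ = ((n * A : ℕ) : ℝ) + ((n*(n-1)*B : ℕ) : ℝ) - μ^2 * (n:ℝ)^t := by rw [hS2]
        _ ≤ μ * (n:ℝ)^t + μ^2 * (((n:ℝ)/((n:ℝ)-1))^(2*x)) * (n:ℝ)^t - μ^2 * (n:ℝ)^t := by
            rw [hmean]; linarith [hBR]
        _ = (μ + μ^2 * (((n:ℝ)/((n:ℝ)-1))^(2*x) - 1)) * (n:ℝ)^t := by ring
    linarith [this]
  -- express probCount via cbad
  have hcount : ((univ.filter fun f : Fin t → Fin n => y ≤ countExact n t f x).card : ℝ)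
      = (n:ℝ)^t - (cbad:ℝ) := by
    have hsplit := Finset.card_filter_add_card_filter_not
      (s := (univ : Finset (Fin t → Fin n)))
      (p := fun f : Fin t → Fin n => y ≤ countExact n t f x)
    rw [card_univ, Fintype.card_fun, Fintype.card_fin, Fintype.card_fin] at hsplit
    have : ((univ.filter fun f : Fin t → Fin n => y ≤ countExact n t f x).card : ℝ) + (cbad:ℝ)
        = ((n:ℝ))^t := by
      rw [hcbad]
      exact_mod_cast congrArg (Nat.cast (R := ℝ)) hsplit
    linarith
  have hP : probCount n t x (fun c => y ≤ c) = 1 - (cbad:ℝ)/(n:ℝ)^t := by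
    rw [probCount, Finset.filter_congr_decidable, hcount]
    field_simp
  rw [hP]
  linarith [hmain]

end UniformChoices

namespace UniformChoices

lemma expCount_lower (n t x : ℕ) (hn : 2 ≤ n) (hx : 1 ≤ x) (hxt : x ≤ t) (htn : t ≤ n) :
    ((t + 1 - x : ℕ) : ℝ)^x / (x.factorial : ℝ) * (1 - (t:ℝ)/n) / (n:ℝ)^(x-1)
      ≤ expCount n t x := by
  have hn0 : (0:ℝ) < n := by positivity
  have hc1 : ((n-1:ℕ):ℝ) = (n:ℝ)-1 := by rw [Nat.cast_sub (by omega)]; norm_num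
  have htn' : (t:ℝ) ≤ (n:ℝ) := by exact_mod_cast htn
  have h1tn : (0:ℝ) ≤ 1 - (t:ℝ)/n := by
    rw [sub_nonneg, div_le_one hn0]; exact htn'
  have hμform : expCount n t x
      = (t.choose x : ℝ) * ((1:ℝ) - 1/n)^(t-x) / (n:ℝ)^(x-1) := by
    rw [expCount_eq]
    push_cast [hc1]
    have h2 : ((n:ℝ)-1)^(t-x) = ((1:ℝ)-1/n)^(t-x) * (n:ℝ)^(t-x) := by
      rw [← mul_pow]; congr 1; field_simp
    have h3 : (n:ℝ)^t = (n:ℝ)^(x-1) * (n:ℝ)^(t-x) * (n:ℝ) := by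
      rw [← pow_add, ← pow_succ]
      congr 1
      omega
    rw [h2, h3]
    field_simp
  rw [hμform]
  have hCl : ((t + 1 - x : ℕ) : ℝ)^x / (x.factorial : ℝ) ≤ (t.choose x : ℝ) := by
    rw [div_le_iff₀ (by positivity)]
    have := Nat.pow_sub_le_descFactorial t x
    rw [Nat.descFactorial_eq_factorial_mul_choose] at this
    calc ((t + 1 - x : ℕ) : ℝ)^x = (((t + 1 - x)^x : ℕ) : ℝ) := by push_cast; ring
      _ ≤ ((x.factorial * t.choose x : ℕ) : ℝ) := by exact_mod_cast this
      _ = (t.choose x : ℝ) * (x.factorial : ℝ) := by push_cast; ring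
  have hpow : (1:ℝ) - (t:ℝ)/n ≤ ((1:ℝ) - 1/n)^(t-x) := by
    have hber := one_add_mul_le_pow (a := -(1/(n:ℝ))) (by
      have : (1:ℝ)/n ≤ 1 := by rw [div_le_one hn0]; exact_mod_cast (by omega : 1 ≤ n)
      linarith) (t-x)
    have h4 : ((t-x : ℕ):ℝ) ≤ (t:ℝ) := by
      have : (t - x : ℕ) ≤ t := Nat.sub_le t x
      exact_mod_cast this
    have h5' : ((t-x:ℕ):ℝ)/n ≤ (t:ℝ)/n := by gcongr
    have h5 : (1:ℝ) - (t:ℝ)/n ≤ 1 + ((t-x:ℕ):ℝ) * -(1/(n:ℝ)) := by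
      rw [mul_neg, mul_one_div]
      linarith
    calc (1:ℝ) - (t:ℝ)/n ≤ 1 + ((t-x:ℕ):ℝ) * -(1/(n:ℝ)) := h5
      _ ≤ ((1:ℝ) + -(1/n))^(t-x) := hber
      _ = ((1:ℝ) - 1/n)^(t-x) := by ring_nf
  gcongr

lemma mu_tendsto (x : ℕ) (hx : 1 ≤ x) (ω : ℕ → ℝ) (hω : Tendsto ω atTop atTop)
    (hto : Tendsto
      (fun n : ℕ => ((⌊(n : ℝ) ^ (((x : ℝ) - 1) / x) * ω n⌋₊ : ℕ) : ℝ) / n)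
      atTop (nhds 0)) :
    Tendsto (fun n : ℕ => expCount n ⌊(n : ℝ) ^ (((x : ℝ) - 1) / x) * ω n⌋₊ x)
      atTop atTop := by
  set T : ℕ → ℕ := fun n => ⌊(n : ℝ) ^ (((x : ℝ) - 1) / x) * ω n⌋₊ with hT
  set r : ℕ → ℝ := fun n => (n : ℝ) ^ (((x : ℝ) - 1) / x) * ω n with hr
  have hxR : (0:ℝ) < x := by exact_mod_cast hx
  have hrtop : Tendsto r atTop atTop := by
    apply tendsto_atTop_mono' atTop _ hω
    filter_upwards [eventually_ge_atTop 1, hω.eventually_ge_atTop 0] with n hn hωn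
    have h1 : (1:ℝ) ≤ (n : ℝ) ^ (((x : ℝ) - 1) / x) := by
      apply Real.one_le_rpow (by exact_mod_cast hn)
      have h2 : (1:ℝ) ≤ (x:ℝ) := by exact_mod_cast hx
      exact div_nonneg (by linarith) (by positivity)
    calc ω n = 1 * ω n := (one_mul _).symm
      _ ≤ (n : ℝ) ^ (((x : ℝ) - 1) / x) * ω n := by
          exact mul_le_mul_of_nonneg_right h1 hωn
  have hTtop : Tendsto T atTop atTop := tendsto_nat_floor_atTop.comp hrtop
  have hbound : ∀ᶠ n : ℕ in atTop,
      (ω n)^x / ((4:ℝ)^x * (x.factorial : ℝ)) * (1 - (T n : ℝ)/n) ≤ expCount n (T n) x := by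
    filter_upwards [eventually_ge_atTop 2, hTtop.eventually_ge_atTop (2*x),
      hto.eventually_lt_const (by norm_num : (0:ℝ) < 1/2),
      hrtop.eventually_ge_atTop 2, hω.eventually_ge_atTop 0] with n hn2 hT2x hT12 hr2 hω0
    have hn0R : (0:ℝ) < n := by
      have : (2:ℝ) ≤ (n:ℝ) := by exact_mod_cast hn2
      linarith
    have hTn : T n ≤ n := by
      have h' : (T n : ℝ) / n < 1/2 := hT12
      rw [div_lt_iff₀ hn0R] at h'
      have : (T n : ℝ) < (n:ℝ) := by linarith
      exact_mod_cast this.le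
    have hxT : x ≤ T n := by omega
    refine le_trans ?_ (expCount_lower n (T n) x hn2 hx hxT hTn)
    have h1Tn : (0:ℝ) ≤ 1 - (T n:ℝ)/n := by
      have : (T n : ℝ)/n < 1/2 := hT12
      linarith
    -- floor bound : T n ≥ r n / 2
    have hfloor : r n - 1 < (T n : ℝ) := Nat.sub_one_lt_floor (r n)
    have hTr : r n / 2 ≤ (T n : ℝ) := by linarith
    -- T + 1 - x ≥ T / 2
    have hTx : (T n : ℝ)/2 ≤ ((T n + 1 - x : ℕ) : ℝ) := by
      have hnat : T n ≤ 2 * (T n + 1 - x) := by omega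
      have := (Nat.cast_le (α := ℝ)).2 hnat
      push_cast at this
      linarith
    have hr4 : r n / 4 ≤ ((T n + 1 - x : ℕ) : ℝ) := by linarith
    have hr0 : (0:ℝ) ≤ r n / 4 := by linarith
    -- (r n)^x = n^(x-1) * ω^x
    have hrx : (r n)^x = (n:ℝ)^(x-1) * (ω n)^x := by
      rw [hr, mul_pow]
      congr 1
      rw [← Real.rpow_natCast ((n:ℝ) ^ (((x : ℝ) - 1) / x)) x,
        ← Real.rpow_mul (le_of_lt hn0R)]
      have hxx : (((x : ℝ) - 1) / x) * (x:ℕ) = ((x - 1 : ℕ) : ℝ) := by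
        rw [Nat.cast_sub hx]
        push_cast
        field_simp
      rw [hxx, Real.rpow_natCast]
    have hid : (ω n)^x / ((4:ℝ)^x * (x.factorial : ℝ)) * (1 - (T n : ℝ)/n)
        = ((r n / 4)^x / (x.factorial : ℝ)) * (1 - (T n : ℝ)/n) / (n:ℝ)^(x-1) := by
      rw [div_pow, hrx]
      have hxf : (0:ℝ) < (x.factorial : ℝ) := by positivity
      have h4 : (0:ℝ) < (4:ℝ)^x := by positivity
      have hnp : (0:ℝ) < (n:ℝ)^(x-1) := by positivity
      field_simp
    rw [hid]
    gcongr
  have hg : Tendsto (fun n : ℕ => 1 - (T n:ℝ)/(n:ℝ)) atTop (nhds 1) := by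
    simpa using hto.const_sub (1:ℝ)
  have hf : Tendsto (fun n : ℕ => (ω n)^x / ((4:ℝ)^x * (x.factorial : ℝ))) atTop atTop := by
    apply Tendsto.atTop_div_const (by positivity)
    exact (tendsto_pow_atTop (by omega : x ≠ 0)).comp hω
  exact tendsto_atTop_mono' atTop hbound (hf.atTop_mul_pos one_pos hg)



end UniformChoices

end Aux

open UniformChoices in
/-- **Lemma 12(c).** Fix `x ≥ 1` and `y ∈ ℕ`, and let `ω → ∞`. With
`t(n) = ⌊n^{(x-1)/x} ω(n)⌋` independent uniform choices from `[n]`, provided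
`t(n) = o(n)`, a.a.s. at least `y` elements of `[n]` are chosen exactly `x` times. -/
theorem count_exact_ge_aas (x : ℕ) (hx : 1 ≤ x) (y : ℕ)
    (ω : ℕ → ℝ) (hω : Tendsto ω atTop atTop)
    (hto : Tendsto
      (fun n : ℕ => ((⌊(n : ℝ) ^ (((x : ℝ) - 1) / x) * ω n⌋₊ : ℕ) : ℝ) / n)
      atTop (nhds 0)) :
    Tendsto
      (fun n : ℕ =>
        probCount n ⌊(n : ℝ) ^ (((x : ℝ) - 1) / x) * ω n⌋₊ x (fun c => y ≤ c))
      atTop (nhds 1) := by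
  set T : ℕ → ℕ := fun n => ⌊(n : ℝ) ^ (((x : ℝ) - 1) / x) * ω n⌋₊ with hT
  set μ : ℕ → ℝ := fun n => expCount n (T n) x with hμ
  set ρ : ℕ → ℝ := fun n => ((n:ℝ)/((n:ℝ)-1))^(2*x) with hρdef
  have hμtop : Tendsto μ atTop atTop := mu_tendsto x hx ω hω hto
  have hρ : Tendsto ρ atTop (nhds 1) := by
    have h2 : Tendsto (fun n : ℕ => (n:ℝ) - 1) atTop atTop :=
      tendsto_atTop_add_const_right atTop (-1) tendsto_natCast_atTop_atTop
    have h1 : Tendsto (fun n : ℕ => (n:ℝ)/((n:ℝ)-1)) atTop (nhds 1) := by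
      have h3 : Tendsto (fun n : ℕ => 1 + ((n:ℝ)-1)⁻¹) atTop (nhds 1) := by
        simpa using tendsto_const_nhds.add (tendsto_inv_atTop_zero.comp h2)
      apply h3.congr'
      filter_upwards [eventually_ge_atTop 2] with n hn
      have hpos : (0:ℝ) < (n:ℝ) - 1 := by
        have : (2:ℝ) ≤ (n:ℝ) := by exact_mod_cast hn
        linarith
      field_simp
      ring
    simpa using h1.pow (2*x)
  have hμy : Tendsto (fun n => μ n - (y:ℝ)) atTop atTop :=
    tendsto_atTop_add_const_right atTop (-(y:ℝ)) hμtop |>.congr (fun n => by ring)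
  have hinv : Tendsto (fun n => (μ n - (y:ℝ))⁻¹) atTop (nhds 0) :=
    tendsto_inv_atTop_zero.comp hμy
  have hq : Tendsto (fun n => μ n/(μ n - (y:ℝ))) atTop (nhds 1) := by
    have h4 : Tendsto (fun n => 1 + (y:ℝ)*(μ n - (y:ℝ))⁻¹) atTop (nhds 1) := by
      simpa using tendsto_const_nhds.add (hinv.const_mul (y:ℝ))
    apply h4.congr'
    filter_upwards [hμy.eventually_gt_atTop 0] with n hn
    field_simp
    ring
  have hbound0 : Tendsto (fun n => (μ n + (μ n)^2*(ρ n - 1))/(μ n - (y:ℝ))^2)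
      atTop (nhds 0) := by
    have h5 : Tendsto (fun n => (μ n/(μ n - (y:ℝ)))*(μ n - (y:ℝ))⁻¹
        + (μ n/(μ n - (y:ℝ)))^2*(ρ n - 1)) atTop (nhds 0) := by
      have l1 := hq.mul hinv
      have l2 := (hq.pow 2).mul (hρ.sub_const 1)
      simpa using l1.add l2
    apply h5.congr'
    filter_upwards [hμy.eventually_gt_atTop 0] with n hn
    field_simp
  have hlo : ∀ᶠ n : ℕ in atTop,
      1 - (μ n + (μ n)^2*(ρ n - 1))/(μ n - (y:ℝ))^2
        ≤ probCount n (T n) x (fun c => y ≤ c) := by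
    filter_upwards [eventually_ge_atTop 2, hμtop.eventually_ge_atTop ((y:ℝ)+1)] with n hn2 hμn
    exact cheb n (T n) x y hx hn2 hμn
  have hup : ∀ᶠ n : ℕ in atTop, probCount n (T n) x (fun c => y ≤ c) ≤ 1 := by
    filter_upwards [eventually_ge_atTop 1] with n hn
    exact probCount_le_one n (T n) x hn _
  have hlotend : Tendsto (fun n => 1 - (μ n + (μ n)^2*(ρ n - 1))/(μ n - (y:ℝ))^2)
      atTop (nhds 1) := by
    simpa using hbound0.const_sub (1:ℝ)
  exact tendsto_of_tendsto_of_tendsto_of_le_of_le' hlotend tendsto_const_nhds hlo hup
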